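/- For every integer k ≥ 5 and every integer m ≥ 1 there exists a graph T ∈ 𝒯_k containing a copy of K_{k−1} such that q(T) = 2, |T| = m·((k−1) + (k−2)(k−3)), and 2||T|| = m·((k−1)(k−2) + (k−3)(k−2)(k−3) + 2(k−3)) + 2(m−1). -/

import Mathlib

open scoped Classical

namespace ATPaper

variable {V : Type*}

/-- Out-degree of `v` in the digraph given by the arc set `A`. -/
noncomputable def outDeg (A : Finset (V × V)) (v : V) : ℕ :=
  (A.filter fun e => e.1 = v).card

/-- In-degree of `v` in the digraph given by the arc set `A`. -/
noncomputable def inDeg (A : Finset (V × V)) (v : V) : ℕ :=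
  (A.filter fun e => e.2 = v).card

/-- `A` is an orientation of the simple graph `G`: every edge of `G` gets exactly one
direction, and every arc of `A` comes from an edge of `G`. -/
def IsOrientation (G : SimpleGraph V) (A : Finset (V × V)) : Prop :=
  (∀ u v : V, G.Adj u v ↔ ((u, v) ∈ A ∨ (v, u) ∈ A)) ∧
    ∀ u v : V, (u, v) ∈ A → (v, u) ∉ A

/-- Number of spanning eulerian subdigraphs of `A` with an even number of arcs. -/
noncomputable def EE (A : Finset (V × V)) : ℕ :=
  (A.powerset.filter fun B => (∀ v, outDeg B v = inDeg B v) ∧ Even B.card).card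

/-- Number of spanning eulerian subdigraphs of `A` with an odd number of arcs. -/
noncomputable def EO (A : Finset (V × V)) : ℕ :=
  (A.powerset.filter fun B => (∀ v, outDeg B v = inDeg B v) ∧ ¬ Even B.card).card

/-- `G` is `f`-Alon–Tarsi. -/
def IsfAT (G : SimpleGraph V) (f : V → ℕ) : Prop :=
  ∃ A : Finset (V × V), IsOrientation G A ∧ EE A ≠ EO A ∧ ∀ v, outDeg A v + 1 ≤ f v

/-- The Alon–Tarsi number of `G`. -/
noncomputable def AT (G : SimpleGraph V) : ℕ := sInf {k : ℕ | IsfAT G fun _ => k}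

/-- `G` is `k`-AT-critical. -/
def ATCritical (G : SimpleGraph V) (k : ℕ) : Prop :=
  AT G = k ∧ ∀ H : SimpleGraph V, H < G → AT H < k

/-- The average degree `2‖G‖/|G|` of `G`. -/
noncomputable def avgDeg (G : SimpleGraph V) : ℝ :=
  2 * (Nat.card G.edgeSet : ℝ) / (Nat.card V : ℝ)

/-- `G` is (isomorphic to) the complete graph `K_k`. -/
def IsCompleteK (G : SimpleGraph V) (k : ℕ) : Prop :=
  Nonempty (G ≃g (⊤ : SimpleGraph (Fin k)))

/-- The induced subgraph of `G` on `B` has no cut vertex. -/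
def NoCutVtx (G : SimpleGraph V) (B : Set V) : Prop :=
  ∀ v ∈ B, (G.induce (B \ {v})).Preconnected

/-- `B` is (the vertex set of) a block of `G`: a maximal connected subgraph without
a cut vertex. -/
def IsBlockSet (G : SimpleGraph V) (B : Set V) : Prop :=
  (G.induce B).Connected ∧ NoCutVtx G B ∧
    ∀ C : Set V, B ⊆ C → (G.induce C).Connected → NoCutVtx G C → C = B

/-- The induced subgraph of `G` on `B` is an odd cycle (connected, 2-regular,
odd order at least 3). -/
def IsOddCycleSet (G : SimpleGraph V) (B : Set V) : Prop :=
  (G.induce B).Connected ∧ Odd (Nat.card B) ∧ 3 ≤ Nat.card B ∧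
    ∀ v ∈ B, Nat.card {u : V | u ∈ B ∧ G.Adj v u} = 2

/-- `G` is a Gallai tree: connected, and every block is a complete graph or an odd cycle. -/
def IsGallaiTree (G : SimpleGraph V) : Prop :=
  G.Connected ∧ ∀ B : Set V, IsBlockSet G B → G.IsClique B ∨ IsOddCycleSet G B

/-- `G ∈ 𝒯_k`: `G` is a Gallai tree with maximum degree at most `k-1`, and `G ≠ K_k`. -/
def MemTk (G : SimpleGraph V) (k : ℕ) : Prop :=
  IsGallaiTree G ∧ (∀ v : V, Nat.card (G.neighborSet v) ≤ k - 1) ∧ ¬ IsCompleteK G k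

/-- `G` contains a copy of `K_n`. -/
def HasClique (G : SimpleGraph V) (n : ℕ) : Prop := ∃ S : Finset V, G.IsNClique n S

/-- `W^k(G)`: the set of vertices of `G` contained in some copy of `K_{k-1}`. -/
def Wk (G : SimpleGraph V) (k : ℕ) : Set V :=
  {v | ∃ S : Finset V, G.IsNClique (k - 1) S ∧ v ∈ S}

/-- `q(G)`: the number of non-cut vertices of `G` lying in some copy of `K_{k-1}`. -/
noncomputable def qT (G : SimpleGraph V) (k : ℕ) : ℕ :=
  Nat.card {v : V | v ∈ Wk G k ∧ (G.induce {v}ᶜ).Preconnected}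

/-- The vertices of `S` lying in `W^k` of the induced subgraph of `G` on `S`. -/
def WkIn (G : SimpleGraph V) (k : ℕ) (S : Set V) : Set V :=
  {v | ∃ hv : v ∈ S, (⟨v, hv⟩ : S) ∈ Wk (G.induce S) k}

/-- `S` is (the vertex set of) a connected component of the induced subgraph of `G` on `X`. -/
def IsComponentOf (G : SimpleGraph V) (X S : Set V) : Prop :=
  S ⊆ X ∧ (G.induce S).Connected ∧ ∀ u ∈ S, ∀ v ∈ X, G.Adj u v → v ∈ S

/-- `G` is `f`-choosable. -/
def Choosable (G : SimpleGraph V) (f : V → ℕ) : Prop :=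
  ∀ L : V → Finset ℕ, (∀ v, (L v).card = f v) →
    ∃ φ : V → ℕ, (∀ v, φ v ∈ L v) ∧ ∀ ⦃u v : V⦄, G.Adj u v → φ u ≠ φ v

/-- `G` is `k`-list-critical: `G` is not `(k-1)`-choosable, but every proper subgraph is. -/
def ListCritical (G : SimpleGraph V) (k : ℕ) : Prop :=
  ¬ Choosable G (fun _ => k - 1) ∧ ∀ H : SimpleGraph V, H < G → Choosable H (fun _ => k - 1)

end ATPaper


namespace Stmt9

abbrev W (m c : ℕ) := Fin m × (Fin (c+2) ⊕ Fin c × Fin (c+1))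

variable {m c : ℕ}

def hub (i : Fin m) (x : Fin (c+2)) : W m c := (i, Sum.inl x)
def pen (i : Fin m) (j : Fin c) (y : Fin (c+1)) : W m c := (i, Sum.inr (j, y))

def att (j : Fin c) : Fin (c+2) := ⟨j.val + 2, by omega⟩

def adj : W m c → W m c → Prop
  | (i, .inl x), (i', .inl x') =>
      (i = i' ∧ x ≠ x') ∨ (i'.val = i.val + 1 ∧ x.val = 1 ∧ x'.val = 0) ∨
        (i.val = i'.val + 1 ∧ x.val = 0 ∧ x'.val = 1)
  | (i, .inl x), (i', .inr (j, y)) => i = i' ∧ x.val = j.val + 2 ∧ y.val = 0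
  | (i, .inr (j, y)), (i', .inl x) => i = i' ∧ x.val = j.val + 2 ∧ y.val = 0
  | (i, .inr (j, y)), (i', .inr (j', y')) => i = i' ∧ j = j' ∧ y ≠ y'

@[simp] lemma adj_hh {i i' : Fin m} {x x' : Fin (c+2)} :
    adj (m := m) (c := c) (i, .inl x) (i', .inl x') ↔
      ((i = i' ∧ x ≠ x') ∨ (i'.val = i.val + 1 ∧ x.val = 1 ∧ x'.val = 0) ∨
        (i.val = i'.val + 1 ∧ x.val = 0 ∧ x'.val = 1)) := Iff.rfl

@[simp] lemma adj_hp {i i' : Fin m} {x : Fin (c+2)} {j : Fin c} {y : Fin (c+1)} :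
    adj (m := m) (c := c) (i, .inl x) (i', .inr (j, y)) ↔
      (i = i' ∧ x.val = j.val + 2 ∧ y.val = 0) := Iff.rfl

@[simp] lemma adj_ph {i i' : Fin m} {x : Fin (c+2)} {j : Fin c} {y : Fin (c+1)} :
    adj (m := m) (c := c) (i, .inr (j, y)) (i', .inl x) ↔
      (i = i' ∧ x.val = j.val + 2 ∧ y.val = 0) := Iff.rfl

@[simp] lemma adj_pp {i i' : Fin m} {j j' : Fin c} {y y' : Fin (c+1)} :
    adj (m := m) (c := c) (i, .inr (j, y)) (i', .inr (j', y')) ↔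
      (i = i' ∧ j = j' ∧ y ≠ y') := Iff.rfl

def TG (m c : ℕ) : SimpleGraph (W m c) where
  Adj := adj
  symm := by
    constructor
    rintro ⟨i, x | ⟨j, y⟩⟩ ⟨i', x' | ⟨j', y'⟩⟩ h <;> simp_all <;> tauto
  loopless := by
    constructor
    rintro ⟨i, x | ⟨j, y⟩⟩ h <;> simp_all

lemma TG_adj {p q : W m c} : (TG m c).Adj p q ↔ adj p q := Iff.rfl

lemma adj_hub {i : Fin m} {x x' : Fin (c+2)} (h : x ≠ x') :
    (TG m c).Adj (hub i x) (hub i x') := Or.inl ⟨rfl, h⟩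

lemma adj_chain {i i' : Fin m} (h : i'.val = i.val + 1) :
    (TG m c).Adj (hub i 1) (hub i' 0) := by
  refine Or.inr (Or.inl ⟨h, ?_, ?_⟩) <;> simp [Fin.val_one, Fin.val_zero]

lemma adj_att {i : Fin m} {j : Fin c} : (TG m c).Adj (hub i (att j)) (pen i j 0) := by
  exact ⟨rfl, rfl, rfl⟩

lemma adj_pen {i : Fin m} {j : Fin c} {y y' : Fin (c+1)} (h : y ≠ y') :
    (TG m c).Adj (pen i j y) (pen i j y') := ⟨rfl, rfl, h⟩


/-- membership in pendant clique (i,j) -/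
def inPen (i : Fin m) (j : Fin c) (p : W m c) : Prop := ∃ y, p = pen i j y

lemma lemA {i : Fin m} {j : Fin c} {p q : W m c} (h : (TG m c).Adj p q)
    (hp : inPen i j p) (hq : ¬ inPen i j q) :
    p = pen i j 0 ∧ q = hub i (att j) := by
  obtain ⟨y, rfl⟩ := hp
  rcases q with ⟨i', x | ⟨j', y'⟩⟩
  · rcases h with ⟨rfl, hx, hy⟩
    have : y = 0 := Fin.ext hy
    subst this
    refine ⟨rfl, ?_⟩
    have : x = att j := Fin.ext hx
    rw [this]; rfl
  · rcases h with ⟨rfl, rfl, hy⟩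
    exact absurd ⟨y', rfl⟩ hq

lemma lemB {t : ℕ} {p q : W m c} (h : (TG m c).Adj p q)
    (hp : p.1.val ≤ t) (hq : ¬ q.1.val ≤ t) :
    p.1.val = t ∧ q.1.val = t + 1 ∧ p.2 = Sum.inl 1 ∧ q.2 = Sum.inl 0 := by
  rcases p with ⟨i, x | ⟨j, y⟩⟩ <;> rcases q with ⟨i', x' | ⟨j', y'⟩⟩ <;>
    dsimp only at hp hq ⊢
  · rcases h with ⟨rfl, -⟩ | ⟨h1, h2, h3⟩ | ⟨h1, -, -⟩
    · exact absurd hp hq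
    · refine ⟨by omega, by omega, ?_, ?_⟩ <;> simp only [Sum.inl.injEq]
      · exact Fin.ext (by simpa using h2)
      · exact Fin.ext (by simpa using h3)
    · omega
  · rcases h with ⟨rfl, -⟩; exact absurd hp hq
  · rcases h with ⟨rfl, -⟩; exact absurd hp hq
  · rcases h with ⟨rfl, -⟩; exact absurd hp hq

lemma walk_inv {S : Set (W m c)} (f : W m c → Prop)
    (hf : ∀ p q : S, ((TG m c).induce S).Adj p q → (f p ↔ f q)) :
    ∀ {a b : S}, ((TG m c).induce S).Reachable a b → (f a ↔ f b) := by
  intro a b hab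
  obtain ⟨w⟩ := hab
  induction w with
  | nil => exact Iff.rfl
  | cons h _ ih => exact (hf _ _ h).trans ih

lemma sep {B : Set (W m c)} (hB : ((TG m c).induce B).Connected)
    (hNC : ∀ v ∈ B, ((TG m c).induce (B \ {v})).Preconnected)
    (f : W m c → Prop) (v : W m c)
    (hf : ∀ p q, (TG m c).Adj p q → p ≠ v → q ≠ v → (f p ↔ f q))
    {u w : W m c} (hu : u ∈ B) (hw : w ∈ B) (huv : u ≠ v) (hwv : w ≠ v)
    (hfu : f u) (hfw : ¬ f w) : False := by
  by_cases hvB : v ∈ B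
  · have hpre := hNC v hvB
    have hre : ((TG m c).induce (B \ {v})).Reachable ⟨u, ⟨hu, huv⟩⟩ ⟨w, ⟨hw, hwv⟩⟩ := hpre _ _
    have := walk_inv f (fun p q hpq => hf p q hpq p.2.2 q.2.2) hre
    exact hfw (this.mp hfu)
  · have hre : ((TG m c).induce B).Reachable ⟨u, hu⟩ ⟨w, hw⟩ := hB.preconnected _ _
    have := walk_inv f
      (fun p q hpq => hf p q hpq (fun h => hvB (h ▸ p.2)) (fun h => hvB (h ▸ q.2))) hre
    exact hfw (this.mp hfu)

/-- the invariant `fun p => p.1.val ≤ t` is preserved away from a vertex `v` that is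
one of the two endpoints of the crossing chain edge -/
lemma hfB {t : ℕ} {v : W m c} (hv : (v.1.val = t ∧ v.2 = Sum.inl 1) ∨
    (v.1.val = t + 1 ∧ v.2 = Sum.inl 0)) :
    ∀ p q : W m c, (TG m c).Adj p q → p ≠ v → q ≠ v → (p.1.val ≤ t ↔ q.1.val ≤ t) := by
  intro p q hpq hpv hqv
  constructor
  · intro hp; by_contra hq
    obtain ⟨h1, h2, h3, h4⟩ := lemB hpq hp hq
    rcases hv with ⟨hv1, hv2⟩ | ⟨hv1, hv2⟩
    · exact hpv (Prod.ext (Fin.ext (by omega)) (h3.trans hv2.symm))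
    · exact hqv (Prod.ext (Fin.ext (by omega)) (h4.trans hv2.symm))
  · intro hq; by_contra hp
    obtain ⟨h1, h2, h3, h4⟩ := lemB hpq.symm hq hp
    rcases hv with ⟨hv1, hv2⟩ | ⟨hv1, hv2⟩
    · exact hqv (Prod.ext (Fin.ext (by omega)) (h3.trans hv2.symm))
    · exact hpv (Prod.ext (Fin.ext (by omega)) (h4.trans hv2.symm))

/-- the invariant `inPen i j` is preserved away from a vertex `v` that is one of the two
endpoints of the attaching edge -/
lemma hfA {i : Fin m} {j : Fin c} {v : W m c}
    (hv : v = hub i (att j) ∨ v = pen i j 0) :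
    ∀ p q : W m c, (TG m c).Adj p q → p ≠ v → q ≠ v → (inPen i j p ↔ inPen i j q) := by
  intro p q hpq hpv hqv
  constructor
  · intro hp; by_contra hq
    obtain ⟨h1, h2⟩ := lemA hpq hp hq
    rcases hv with rfl | rfl
    · exact hqv h2
    · exact hpv h1
  · intro hq; by_contra hp
    obtain ⟨h1, h2⟩ := lemA hpq.symm hq hp
    rcases hv with rfl | rfl
    · exact hpv h2
    · exact hqv h1

lemma unitSep {B : Set (W m c)} (hB : ((TG m c).induce B).Connected)
    (hNC : ∀ v ∈ B, ((TG m c).induce (B \ {v})).Preconnected)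
    {u w : W m c} (hu : u ∈ B) (hw : w ∈ B) (hlt : u.1.val < w.1.val)
    (hna : ¬ (TG m c).Adj u w) : False := by
  set t := u.1.val with ht
  by_cases hu1 : u.2 = Sum.inl 1
  · have htm : t + 1 < m := lt_of_le_of_lt hlt w.1.isLt
    set v : W m c := (⟨t + 1, htm⟩, Sum.inl 0) with hv
    have hwv : w ≠ v := by
      rintro rfl
      apply hna
      have : u = (u.1, Sum.inl 1) := Prod.ext rfl hu1
      rw [this]
      exact adj_chain rfl
    have huv : u ≠ v := by
      intro h
      have := congrArg (fun p => (Prod.fst p).val) h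
      simp [hv] at this
      omega
    exact sep hB hNC (fun p => p.1.val ≤ t) v (hfB (t := t) (Or.inr ⟨rfl, rfl⟩)) hu hw huv hwv le_rfl (by omega)
  · set v : W m c := (u.1, Sum.inl 1) with hv
    have huv : u ≠ v := fun h => hu1 (congrArg Prod.snd h)
    have hwv : w ≠ v := by
      intro h
      have := congrArg (fun p => (Prod.fst p).val) h
      simp [hv] at this
      omega
    exact sep hB hNC (fun p => p.1.val ≤ t) v (hfB (t := t) (Or.inl ⟨rfl, rfl⟩)) hu hw huv hwv le_rfl (by omega)

lemma hubPenSep {B : Set (W m c)} (hB : ((TG m c).induce B).Connected)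
    (hNC : ∀ v ∈ B, ((TG m c).induce (B \ {v})).Preconnected)
    {i : Fin m} {x : Fin (c+2)} {j : Fin c} {y : Fin (c+1)}
    (hu : (i, Sum.inl x) ∈ B) (hw : pen i j y ∈ B)
    (hna : ¬ (TG m c).Adj (i, Sum.inl x) (pen i j y)) : False := by
  have hor : x.val ≠ j.val + 2 ∨ y.val ≠ 0 := by
    by_contra h
    push_neg at h
    exact hna ⟨rfl, h.1, h.2⟩
  have hup : ¬ inPen i j (i, Sum.inl x) := by rintro ⟨y', h⟩; cases h
  rcases hor with hx | hy
  · refine sep hB hNC (inPen i j) (hub i (att j)) (hfA (Or.inl rfl)) hw hu ?_ ?_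
      ⟨y, rfl⟩ hup
    · intro h; cases h
    · intro h
      apply hx
      have := congrArg Prod.snd h
      simpa [hub, att, Fin.ext_iff] using this
  · refine sep hB hNC (inPen i j) (pen i j 0) (hfA (Or.inr rfl)) hw hu ?_ ?_
      ⟨y, rfl⟩ hup
    · intro h
      apply hy
      have := congrArg Prod.snd h
      have h2 := Sum.inr_injective this
      simp only [Prod.mk.injEq] at h2
      rw [h2.2]; simp
    · intro h; cases h

lemma block_clique {B : Set (W m c)} (hB : ((TG m c).induce B).Connected)
    (hNC : ∀ v ∈ B, ((TG m c).induce (B \ {v})).Preconnected) :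
    (TG m c).IsClique B := by
  intro u hu w hw hne
  by_contra hna
  rcases lt_trichotomy u.1.val w.1.val with hlt | heq | hlt
  · exact unitSep hB hNC hu hw hlt hna
  · have hiw : u.1 = w.1 := Fin.ext heq
    rcases u with ⟨i, x | ⟨j, y⟩⟩ <;> rcases w with ⟨i', x' | ⟨j', y'⟩⟩ <;>
      dsimp only at hiw <;> subst hiw
    · refine hna (Or.inl ⟨rfl, ?_⟩)
      rintro rfl; exact hne rfl
    · exact hubPenSep hB hNC hu hw hna
    · exact hubPenSep hB hNC hw hu (fun h => hna h.symm)
    · by_cases hj : j = j'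
      · subst hj
        refine hna ⟨rfl, rfl, ?_⟩
        rintro rfl; exact hne rfl
      · refine sep hB hNC (inPen i j) (hub i (att j)) (hfA (Or.inl rfl)) hu hw ?_ ?_
          ⟨y, rfl⟩ ?_
        · intro h; cases h
        · intro h; cases h
        · rintro ⟨y'', h⟩
          apply hj
          have := congrArg Prod.snd h
          simp [pen] at this
          exact this.1.symm
  · exact unitSep hB hNC hw hu hlt (fun h => hna h.symm)

section Reach

variable {S : Set (W m c)}

lemma rstep {p q : W m c} (hp : p ∈ S) (hq : q ∈ S) (h : (TG m c).Adj p q) :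
    ((TG m c).induce S).Reachable ⟨p, hp⟩ ⟨q, hq⟩ :=
  SimpleGraph.Adj.reachable h

/-- the distinguished vertex `2` of the hub -/
def two (hc : 0 < c) : Fin (c+2) := ⟨2, by omega⟩

lemma master (hc : 0 < c) (hm : 0 < m)
    (Hhub : ∀ (i : Fin m) (x : Fin (c+2)), 2 ≤ x.val → hub i x ∈ S)
    (Hpen : ∀ i j y, pen i j y ∈ S)
    (Hlink1 : ∀ i : Fin m, i.val + 1 < m → hub i 1 ∈ S)
    (Hlink0 : ∀ i : Fin m, 0 < i.val → hub i 0 ∈ S) :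
    ((TG m c).induce S).Preconnected := by
  have h2 : ∀ i : Fin m, hub i (two hc) ∈ S := fun i => Hhub i _ le_rfl
  -- reach the vertex 2 of the own unit
  have toTwo : ∀ (p : W m c) (hp : p ∈ S),
      ((TG m c).induce S).Reachable ⟨p, hp⟩ ⟨hub p.1 (two hc), h2 p.1⟩ := by
    rintro ⟨i, x | ⟨j, y⟩⟩ hp
    · by_cases hx : x = two hc
      · subst hx; rfl
      · exact rstep hp (h2 i) (adj_hub hx)
    · have hatt : hub i (att j) ∈ S := Hhub i (att j) (by simp [att])
      have step2 : ((TG m c).induce S).Reachable ⟨hub i (att j), hatt⟩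
          ⟨hub i (two hc), h2 i⟩ := by
        by_cases hx : att j = two hc
        · have he : (⟨hub i (att j), hatt⟩ : S) = ⟨hub i (two hc), h2 i⟩ :=
            Subtype.ext (show hub i (att j) = hub i (two hc) by rw [hx])
          rw [he]
        · exact rstep hatt (h2 i) (adj_hub hx)
      by_cases hy : y = 0
      · subst hy
        exact (rstep hp hatt ((adj_att (i := i) (j := j)).symm)).trans step2
      · refine (rstep hp (Hpen i j 0) (adj_pen hy)).trans ?_
        exact (rstep (Hpen i j 0) hatt ((adj_att (i := i) (j := j)).symm)).trans step2
  -- reach unit 0 from any unit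
  have down : ∀ (n : ℕ) (i : Fin m) (h : i.val = n),
      ((TG m c).induce S).Reachable ⟨hub i (two hc), h2 i⟩
        ⟨hub ⟨0, hm⟩ (two hc), h2 _⟩ := by
    intro n
    induction n with
    | zero =>
      intro i h
      have hi : i = ⟨0, hm⟩ := Fin.ext h
      subst hi
      exact SimpleGraph.Reachable.refl _
    | succ n ih =>
      intro i h
      have hn : n + 1 < m := h ▸ i.isLt
      set i' : Fin m := ⟨n, by omega⟩ with hi'
      have hi0 : hub i 0 ∈ S := Hlink0 i (by omega)
      have hi'1 : hub i' 1 ∈ S := Hlink1 i' (by simpa [hi'] using hn)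
      refine (rstep (h2 i) hi0 (adj_hub (by simp [two, Fin.ext_iff]))).trans ?_
      refine (rstep hi0 hi'1 (adj_chain (i := i') (by simp [hi', h])).symm).trans ?_
      refine (rstep hi'1 (h2 i') (adj_hub (by simp [two, Fin.ext_iff]))).trans (ih i' rfl)
  intro a b
  obtain ⟨pa, hpa⟩ := a
  obtain ⟨pb, hpb⟩ := b
  exact ((toTwo pa hpa).trans (down pa.1.val pa.1 rfl)).trans
    ((toTwo pb hpb).trans (down pb.1.val pb.1 rfl)).symm

end Reach

lemma notPre {v : W m c} (f : W m c → Prop)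
    (hf : ∀ p q, (TG m c).Adj p q → p ≠ v → q ≠ v → (f p ↔ f q))
    {a b : W m c} (ha : a ≠ v) (hb : b ≠ v) (hfa : f a) (hfb : ¬ f b) :
    ¬ ((TG m c).induce ({v}ᶜ : Set (W m c))).Preconnected := by
  intro h
  have := walk_inv f (fun p q hpq => hf p q hpq p.2 q.2) (h ⟨a, ha⟩ ⟨b, hb⟩)
  exact hfb (this.mp hfa)

lemma TG_preconnected (hc : 0 < c) (hm : 0 < m) : (TG m c).Preconnected := by
  have h := master (S := (Set.univ : Set (W m c))) hc hm (fun _ _ _ => trivial)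
    (fun _ _ _ => trivial) (fun _ _ => trivial) (fun _ _ => trivial)
  intro a b
  have := h ⟨a, trivial⟩ ⟨b, trivial⟩
  have h2 := this.map (SimpleGraph.induceUnivIso (TG m c)).toHom
  simpa using h2

lemma TG_connected (hc : 0 < c) (hm : 0 < m) : (TG m c).Connected := by
  have : Nonempty (W m c) := ⟨(⟨0, hm⟩, Sum.inl 0)⟩
  exact ⟨TG_preconnected hc hm⟩

lemma noncut0 (hc : 0 < c) (hm : 0 < m) :
    ((TG m c).induce ({hub ⟨0, hm⟩ 0}ᶜ : Set (W m c))).Preconnected := by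
  apply master hc hm
  · intro i x hx
    intro h
    rw [Set.mem_singleton_iff] at h
    have := congrArg Prod.snd h
    simp only [hub, Sum.inl.injEq] at this
    rw [this] at hx
    simp at hx
  · rintro i j y h
    rw [Set.mem_singleton_iff] at h
    cases congrArg Prod.snd h
  · intro i hi h
    rw [Set.mem_singleton_iff] at h
    have := congrArg Prod.snd h
    simp only [hub, Sum.inl.injEq] at this
    have := congrArg Fin.val this
    simp at this
  · intro i hi h
    rw [Set.mem_singleton_iff] at h
    have := congrArg (fun p => (Prod.fst p).val) h
    simp [hub] at this
    omega

lemma noncut1 (hc : 0 < c) (hm : 0 < m) :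
    ((TG m c).induce ({hub ⟨m - 1, by omega⟩ 1}ᶜ : Set (W m c))).Preconnected := by
  apply master hc hm
  · intro i x hx
    intro h
    rw [Set.mem_singleton_iff] at h
    have := congrArg Prod.snd h
    simp only [hub, Sum.inl.injEq] at this
    rw [this] at hx
    simp at hx
  · rintro i j y h
    rw [Set.mem_singleton_iff] at h
    cases congrArg Prod.snd h
  · intro i hi h
    rw [Set.mem_singleton_iff] at h
    have := congrArg (fun p => (Prod.fst p).val) h
    simp [hub] at this
    omega
  · intro i hi h
    rw [Set.mem_singleton_iff] at h
    have := congrArg Prod.snd h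
    simp only [hub, Sum.inl.injEq] at this
    have := congrArg Fin.val this
    simp at this

lemma cut_att {i : Fin m} {x : Fin (c+2)} (hx : 2 ≤ x.val) (hxc : x.val < c + 2) :
    ¬ ((TG m c).induce ({(i, Sum.inl x)}ᶜ : Set (W m c))).Preconnected := by
  have hxc' : x.val - 2 < c := by omega
  set j : Fin c := ⟨x.val - 2, hxc'⟩ with hj
  have hxa : x = att j := Fin.ext (by simp [att, hj]; omega)
  have hv : (i, Sum.inl x) = hub i (att j) := by rw [hxa]; rfl
  rw [hv]
  refine notPre (inPen i j) (hfA (Or.inl rfl)) (a := pen i j 0) (b := hub i 0) ?_ ?_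
    ⟨0, rfl⟩ ?_
  · intro h; cases congrArg Prod.snd h
  · intro h
    have := congrArg Prod.snd h
    simp only [hub, Sum.inl.injEq] at this
    have := congrArg Fin.val this
    simp [att] at this
  · rintro ⟨y', h⟩; cases congrArg Prod.snd h

lemma cut0 {i : Fin m} (hi : 0 < i.val) :
    ¬ ((TG m c).induce ({(i, Sum.inl (0 : Fin (c+2)))}ᶜ : Set (W m c))).Preconnected := by
  have hm : 0 < m := by have := i.isLt; omega
  refine notPre (fun p => p.1.val ≤ i.val - 1)
    (hfB (Or.inr ⟨by dsimp only; omega, rfl⟩)) (a := (⟨0, hm⟩, Sum.inl 1)) (b := (i, Sum.inl 1)) ?_ ?_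
    (by simp) (by dsimp only; omega)
  · intro h
    have := congrArg Prod.snd h
    simp only [Sum.inl.injEq] at this
    have := congrArg Fin.val this
    simp at this
  · intro h
    have := congrArg Prod.snd h
    simp only [Sum.inl.injEq] at this
    have := congrArg Fin.val this
    simp at this

lemma cut1 {i : Fin m} (hi : i.val + 1 < m) :
    ¬ ((TG m c).induce ({(i, Sum.inl (1 : Fin (c+2)))}ᶜ : Set (W m c))).Preconnected := by
  refine notPre (fun p => p.1.val ≤ i.val)
    (hfB (Or.inl ⟨rfl, rfl⟩)) (a := (i, Sum.inl 0)) (b := (⟨i.val + 1, hi⟩, Sum.inl 0)) ?_ ?_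
    (by simp) (by simp)
  · intro h
    have := congrArg Prod.snd h
    simp only [Sum.inl.injEq] at this
    have := congrArg Fin.val this
    simp at this
  · intro h
    have := congrArg Prod.snd h
    simp only [Sum.inl.injEq] at this
    have := congrArg Fin.val this
    simp at this

/-- the hub of unit `i` as a finset -/
def hubF (i : Fin m) : Finset (W m c) :=
  Finset.univ.image (fun x : Fin (c+2) => hub i x)

lemma hub_inj (i : Fin m) : Function.Injective (fun x : Fin (c+2) => hub (c := c) i x) := by
  intro a b h
  simpa [hub, Prod.ext_iff] using h

lemma hub_isNClique (i : Fin m) : (TG m c).IsNClique (c+2) (hubF i) := by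
  constructor
  · intro u hu w hw hne
    simp only [hubF, Finset.coe_image, Set.mem_image, Finset.coe_univ, Set.image_univ,
      Set.mem_range] at hu hw
    obtain ⟨x, rfl⟩ := hu
    obtain ⟨x', rfl⟩ := hw
    exact adj_hub (fun h => hne (by rw [h]))
  · rw [hubF, Finset.card_image_of_injective _ (hub_inj i)]
    simp

lemma pen_inj (i : Fin m) (j : Fin c) :
    Function.Injective (fun y : Fin (c+1) => pen (m := m) i j y) := by
  intro a b h
  simpa [pen, Prod.ext_iff] using h

/-- every `(c+2)`-clique consists of hub vertices -/
lemma clique_class (hc : 0 < c) {S : Finset (W m c)}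
    (hS : (TG m c).IsNClique (c+2) S) {v : W m c} (hv : v ∈ S) :
    ∃ (i : Fin m) (x : Fin (c+2)), v = (i, Sum.inl x) := by
  by_contra hcon
  push_neg at hcon
  rcases v with ⟨i, x | ⟨j, y⟩⟩
  · exact hcon i x rfl
  clear hcon
  set himg : Finset (W m c) := Finset.univ.image (fun y : Fin (c+1) => pen i j y) with hhimg
  have hcard_himg : himg.card = c + 1 := by
    rw [hhimg, Finset.card_image_of_injective _ (pen_inj i j)]; simp
  have key : ∀ p ∈ S, p ∉ himg → p = hub i (att j) := by
    intro p hp hpn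
    have hpv : p ≠ (i, Sum.inr (j, y)) := by
      rintro rfl
      exact hpn (Finset.mem_image.mpr ⟨y, Finset.mem_univ _, rfl⟩)
    have hadj := hS.1 hv hp (fun h => hpv h.symm)
    rcases p with ⟨i', x' | ⟨j', y'⟩⟩
    · obtain ⟨rfl, hx', hy⟩ := hadj
      have : x' = att j := Fin.ext hx'
      rw [this]; rfl
    · obtain ⟨rfl, rfl, -⟩ := hadj
      exact absurd (Finset.mem_image.mpr ⟨y', Finset.mem_univ _, rfl⟩) hpn
  have hsplit := Finset.card_filter_add_card_filter_not
    (s := S) (p := fun p => p ∈ himg)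
  have hsub : S.filter (fun p => p ∉ himg) ⊆ {hub i (att j)} := by
    intro p hp
    rw [Finset.mem_filter] at hp
    rw [Finset.mem_singleton]
    exact key p hp.1 hp.2
  have hle1 : (S.filter (fun p => p ∉ himg)).card ≤ 1 :=
    le_trans (Finset.card_le_card hsub) (by simp)
  have hge : 1 < (S.filter (fun p => p ∈ himg)).card := by
    have := hS.2
    omega
  obtain ⟨a, ha, b, hb, hab⟩ := Finset.one_lt_card.mp hge
  rw [Finset.mem_filter] at ha hb
  obtain ⟨ya, -, rfl⟩ := Finset.mem_image.mp ha.2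
  obtain ⟨yb, -, rfl⟩ := Finset.mem_image.mp hb.2
  -- there must be a hub vertex in S, else S ⊆ himg is too small
  have hhub : hub i (att j) ∈ S := by
    by_contra hh
    have : S ⊆ himg := by
      intro p hp
      by_contra hpn
      exact hh (key p hp hpn ▸ hp)
    have := Finset.card_le_card this
    rw [hS.2, hcard_himg] at this
    omega
  have h0a : (ya : Fin (c+1)) = 0 := by
    have hne : hub i (att j) ≠ pen i j ya := by
      intro h; cases congrArg Prod.snd h
    have := hS.1 hhub ha.1 hne
    obtain ⟨-, -, h0⟩ := this
    exact Fin.ext h0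
  have h0b : (yb : Fin (c+1)) = 0 := by
    have hne : hub i (att j) ≠ pen i j yb := by
      intro h; cases congrArg Prod.snd h
    have := hS.1 hhub hb.1 hne
    obtain ⟨-, -, h0⟩ := this
    exact Fin.ext h0
  exact hab (by rw [h0a, h0b])

section Degrees

lemma card_nb {v : W m c} {D : Type} [Fintype D] (g : D → W m c)
    (hg : Function.Injective g)
    (hr : ∀ u, (TG m c).Adj v u ↔ ∃ d, g d = u) :
    Nat.card ((TG m c).neighborSet v) = Fintype.card D := by
  have hset : (TG m c).neighborSet v = Set.range g := by
    ext u
    simp only [SimpleGraph.mem_neighborSet, Set.mem_range, hr]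
  rw [hset, Nat.card_range_of_injective hg, Nat.card_eq_fintype_card]

lemma hub_eq_iff {i i' : Fin m} {x x' : Fin (c+2)} :
    hub i x = (i', Sum.inl x') ↔ i = i' ∧ x = x' := by
  simp [hub, Prod.ext_iff]

lemma pen_eq_iff {i i' : Fin m} {j j' : Fin c} {y y' : Fin (c+1)} :
    pen i j y = (i', Sum.inr (j', y')) ↔ i = i' ∧ j = j' ∧ y = y' := by
  simp [pen, Prod.ext_iff]

lemma nb_att (i : Fin m) (j : Fin c) :
    Nat.card ((TG m c).neighborSet (hub i (att j))) = c + 2 := by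
  have h := card_nb (v := hub i (att j)) (D := Fin (c+1) ⊕ PUnit)
    (Sum.elim (fun z => hub i ((att j).succAbove z)) (fun _ => pen i j 0)) ?_ ?_
  · simpa using h
  · rintro (a | a) (b | b) h
    · have := (hub_eq_iff.mp h).2
      rw [Fin.succAbove_right_injective.eq_iff] at this
      rw [this]
    · simp [hub, pen] at h
    · simp [hub, pen] at h
    · rfl
  · rintro ⟨i', x' | ⟨j', y'⟩⟩
    · constructor
      · rintro (⟨rfl, hne⟩ | ⟨-, h1, -⟩ | ⟨-, h0, -⟩)
        · obtain ⟨z, hz⟩ := Fin.exists_succAbove_eq (Ne.symm hne)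
          exact ⟨Sum.inl z, by simp only [Sum.elim_inl, hub]; rw [hz]⟩
        · simp [att] at h1
        · simp [att] at h0
      · rintro ⟨(z | z), h⟩
        · obtain ⟨rfl, rfl⟩ := hub_eq_iff.mp h
          exact Or.inl ⟨rfl, Ne.symm (Fin.succAbove_ne _ _)⟩
        · simp [pen] at h
    · constructor
      · rintro ⟨rfl, hj, hy⟩
        have hj' : j' = j := Fin.ext (by simp [att] at hj; omega)
        have hy' : y' = 0 := Fin.ext hy
        exact ⟨Sum.inr PUnit.unit, by rw [hj', hy']; rfl⟩
      · rintro ⟨(z | z), h⟩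
        · simp [hub] at h
        · obtain ⟨rfl, rfl, rfl⟩ := pen_eq_iff.mp h
          exact ⟨rfl, by simp [att], rfl⟩

lemma nb_h00 {i : Fin m} (hi : i.val = 0) :
    Nat.card ((TG m c).neighborSet (hub i 0)) = c + 1 := by
  have h := card_nb (v := hub i 0) (D := Fin (c+1))
    (fun z => hub i ((0 : Fin (c+2)).succAbove z)) ?_ ?_
  · simpa using h
  · intro a b h
    have := (hub_eq_iff.mp h).2
    rwa [Fin.succAbove_right_injective.eq_iff] at this
  · rintro ⟨i', x' | ⟨j', y'⟩⟩
    · constructor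
      · rintro (⟨rfl, hne⟩ | ⟨-, h1, -⟩ | ⟨h0, -, -⟩)
        · obtain ⟨z, hz⟩ := Fin.exists_succAbove_eq (Ne.symm hne)
          exact ⟨z, by simp only [hub]; rw [hz]⟩
        · simp at h1
        · omega
      · rintro ⟨z, h⟩
        obtain ⟨rfl, rfl⟩ := hub_eq_iff.mp h
        exact Or.inl ⟨rfl, Ne.symm (Fin.succAbove_ne _ _)⟩
    · constructor
      · rintro ⟨rfl, hj, hy⟩
        simp at hj
      · rintro ⟨z, h⟩
        simp [hub] at h

lemma nb_h0p {i : Fin m} (hi : 0 < i.val) :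
    Nat.card ((TG m c).neighborSet (hub i 0)) = c + 2 := by
  have h := card_nb (v := hub i 0) (D := Fin (c+1) ⊕ PUnit)
    (Sum.elim (fun z => hub i ((0 : Fin (c+2)).succAbove z))
      (fun _ => (⟨i.val - 1, by have := i.isLt; omega⟩, Sum.inl 1))) ?_ ?_
  · simpa using h
  · rintro (a | a) (b | b) h
    · have := (hub_eq_iff.mp h).2
      rw [Fin.succAbove_right_injective.eq_iff] at this
      rw [this]
    · obtain ⟨h1, -⟩ := hub_eq_iff.mp h
      exfalso; have := congrArg Fin.val h1; simp at this; omega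
    · obtain ⟨h1, -⟩ := hub_eq_iff.mp h.symm
      exfalso; have := congrArg Fin.val h1; simp at this; omega
    · rfl
  · rintro ⟨i', x' | ⟨j', y'⟩⟩
    · constructor
      · rintro (⟨rfl, hne⟩ | ⟨-, h1, -⟩ | ⟨h0, -, h2⟩)
        · obtain ⟨z, hz⟩ := Fin.exists_succAbove_eq (Ne.symm hne)
          exact ⟨Sum.inl z, by simp only [Sum.elim_inl, hub]; rw [hz]⟩
        · simp at h1
        · refine ⟨Sum.inr PUnit.unit, ?_⟩
          have hi' : i' = ⟨i.val - 1, by have := i.isLt; omega⟩ := Fin.ext (by simp; omega)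
          have hx' : x' = 1 := Fin.ext (by simpa using h2)
          simp only [Sum.elim_inr]
          rw [hi', hx']
      · rintro ⟨(z | z), h⟩
        · obtain ⟨rfl, rfl⟩ := hub_eq_iff.mp h
          exact Or.inl ⟨rfl, Ne.symm (Fin.succAbove_ne _ _)⟩
        · simp only [Sum.elim_inr] at h
          obtain ⟨h1, h2⟩ := Prod.ext_iff.mp h
          simp only [Sum.inl.injEq] at h2
          refine Or.inr (Or.inr ⟨?_, rfl, ?_⟩)
          · have := congrArg Fin.val h1; simp at this; omega
          · rw [← h2]; simp
    · constructor
      · rintro ⟨rfl, hj, hy⟩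
        simp at hj
      · rintro ⟨(z | z), h⟩
        · simp [hub] at h
        · simp [Prod.ext_iff] at h

lemma nb_h1l {i : Fin m} (hi : ¬ (i.val + 1 < m)) :
    Nat.card ((TG m c).neighborSet (hub i 1)) = c + 1 := by
  have h := card_nb (v := hub i 1) (D := Fin (c+1))
    (fun z => hub i ((1 : Fin (c+2)).succAbove z)) ?_ ?_
  · simpa using h
  · intro a b h
    have := (hub_eq_iff.mp h).2
    rwa [Fin.succAbove_right_injective.eq_iff] at this
  · rintro ⟨i', x' | ⟨j', y'⟩⟩
    · constructor
      · rintro (⟨rfl, hne⟩ | ⟨h1, -, -⟩ | ⟨-, h0, -⟩)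
        · obtain ⟨z, hz⟩ := Fin.exists_succAbove_eq (Ne.symm hne)
          exact ⟨z, by simp only [hub]; rw [hz]⟩
        · exact absurd (h1 ▸ i'.isLt) hi
        · simp at h0
      · rintro ⟨z, h⟩
        obtain ⟨rfl, rfl⟩ := hub_eq_iff.mp h
        exact Or.inl ⟨rfl, Ne.symm (Fin.succAbove_ne _ _)⟩
    · constructor
      · rintro ⟨rfl, hj, hy⟩
        simp at hj
      · rintro ⟨z, h⟩
        simp [hub] at h

lemma nb_h1p {i : Fin m} (hi : i.val + 1 < m) :
    Nat.card ((TG m c).neighborSet (hub i 1)) = c + 2 := by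
  have h := card_nb (v := hub i 1) (D := Fin (c+1) ⊕ PUnit)
    (Sum.elim (fun z => hub i ((1 : Fin (c+2)).succAbove z))
      (fun _ => (⟨i.val + 1, hi⟩, Sum.inl 0))) ?_ ?_
  · simpa using h
  · rintro (a | a) (b | b) h
    · have := (hub_eq_iff.mp h).2
      rw [Fin.succAbove_right_injective.eq_iff] at this
      rw [this]
    · obtain ⟨h1, -⟩ := hub_eq_iff.mp h
      exfalso; have := congrArg Fin.val h1; simp at this
    · obtain ⟨h1, -⟩ := hub_eq_iff.mp h.symm
      exfalso; have := congrArg Fin.val h1; simp at this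
    · rfl
  · rintro ⟨i', x' | ⟨j', y'⟩⟩
    · constructor
      · rintro (⟨rfl, hne⟩ | ⟨h1, -, h2⟩ | ⟨-, h0, -⟩)
        · obtain ⟨z, hz⟩ := Fin.exists_succAbove_eq (Ne.symm hne)
          exact ⟨Sum.inl z, by simp only [Sum.elim_inl, hub]; rw [hz]⟩
        · refine ⟨Sum.inr PUnit.unit, ?_⟩
          have hi' : i' = ⟨i.val + 1, hi⟩ := Fin.ext (by simp; omega)
          have hx' : x' = 0 := Fin.ext (by simpa using h2)
          simp only [Sum.elim_inr]
          rw [hi', hx']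
        · simp at h0
      · rintro ⟨(z | z), h⟩
        · obtain ⟨rfl, rfl⟩ := hub_eq_iff.mp h
          exact Or.inl ⟨rfl, Ne.symm (Fin.succAbove_ne _ _)⟩
        · simp only [Sum.elim_inr] at h
          obtain ⟨h1, h2⟩ := Prod.ext_iff.mp h
          simp only [Sum.inl.injEq] at h2
          refine Or.inr (Or.inl ⟨?_, rfl, ?_⟩)
          · have := congrArg Fin.val h1; simp at this; omega
          · rw [← h2]; simp
    · constructor
      · rintro ⟨rfl, hj, hy⟩
        simp at hj
      · rintro ⟨(z | z), h⟩
        · simp [hub] at h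
        · simp [Prod.ext_iff] at h

lemma nb_p0 (i : Fin m) (j : Fin c) :
    Nat.card ((TG m c).neighborSet (pen i j 0)) = c + 1 := by
  have h := card_nb (v := pen i j 0) (D := Fin c ⊕ PUnit)
    (Sum.elim (fun z => pen i j ((0 : Fin (c+1)).succAbove z))
      (fun _ => hub i (att j))) ?_ ?_
  · simpa using h
  · rintro (a | a) (b | b) h
    · have := (pen_eq_iff.mp h).2.2
      rw [Fin.succAbove_right_injective.eq_iff] at this
      rw [this]
    · simp [hub, pen] at h
    · simp [hub, pen] at h
    · rfl
  · rintro ⟨i', x' | ⟨j', y'⟩⟩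
    · constructor
      · rintro ⟨rfl, hx, hy⟩
        refine ⟨Sum.inr PUnit.unit, ?_⟩
        simp only [Sum.elim_inr]
        have : x' = att j := Fin.ext (by simpa [att] using hx)
        rw [this]; rfl
      · rintro ⟨(z | z), h⟩
        · simp [pen] at h
        · simp only [Sum.elim_inr] at h
          obtain ⟨rfl, rfl⟩ := hub_eq_iff.mp h
          exact ⟨rfl, by simp [att], rfl⟩
    · constructor
      · rintro ⟨rfl, rfl, hne⟩
        obtain ⟨z, hz⟩ := Fin.exists_succAbove_eq (Ne.symm hne)
        exact ⟨Sum.inl z, by simp only [Sum.elim_inl, pen]; rw [hz]⟩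
      · rintro ⟨(z | z), h⟩
        · obtain ⟨rfl, rfl, rfl⟩ := pen_eq_iff.mp h
          exact ⟨rfl, rfl, Ne.symm (Fin.succAbove_ne _ _)⟩
        · simp [hub] at h

lemma nb_py {i : Fin m} {j : Fin c} {y : Fin (c+1)} (hy : y ≠ 0) :
    Nat.card ((TG m c).neighborSet (pen i j y)) = c := by
  have h := card_nb (v := pen i j y) (D := Fin c)
    (fun z => pen i j (y.succAbove z)) ?_ ?_
  · simpa using h
  · intro a b h
    have := (pen_eq_iff.mp h).2.2
    rwa [Fin.succAbove_right_injective.eq_iff] at this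
  · rintro ⟨i', x' | ⟨j', y'⟩⟩
    · constructor
      · rintro ⟨rfl, hx, hy0⟩
        exact absurd (Fin.ext hy0) hy
      · rintro ⟨z, h⟩
        simp [pen] at h
    · constructor
      · rintro ⟨rfl, rfl, hne⟩
        obtain ⟨z, hz⟩ := Fin.exists_succAbove_eq (Ne.symm hne)
        exact ⟨z, by simp only [pen]; rw [hz]⟩
      · rintro ⟨z, h⟩
        obtain ⟨rfl, rfl, rfl⟩ := pen_eq_iff.mp h
        exact ⟨rfl, rfl, Ne.symm (Fin.succAbove_ne _ _)⟩

/-- the degree function of `TG m c` -/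
def degW : W m c → ℕ
  | (i, .inl x) =>
      if x.val = 0 then (if i.val = 0 then c+1 else c+2)
      else if x.val = 1 then (if i.val + 1 < m then c+2 else c+1) else c+2
  | (_, .inr (_, y)) => if y.val = 0 then c+1 else c

lemma nb_eq_degW (v : W m c) : Nat.card ((TG m c).neighborSet v) = degW v := by
  rcases v with ⟨i, x | ⟨j, y⟩⟩
  · rw [show ((i, Sum.inl x) : W m c) = hub i x from rfl]
    by_cases hx0 : x.val = 0
    · have hx : x = 0 := Fin.ext hx0
      subst hx
      by_cases hi : i.val = 0
      · rw [nb_h00 hi]; simp [degW, hub, hi]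
      · rw [nb_h0p (by omega)]; simp [degW, hub, hi]
    · by_cases hx1 : x.val = 1
      · have hx : x = 1 := Fin.ext hx1
        subst hx
        by_cases hi : i.val + 1 < m
        · rw [nb_h1p hi]; simp [degW, hub, hi]
        · rw [nb_h1l hi]; simp [degW, hub, hi]
      · have hx2 : 2 ≤ x.val := by omega
        have hxe : x = att ⟨x.val - 2, by have := x.isLt; omega⟩ := by
          apply Fin.ext; simp [att]; omega
        rw [hxe, nb_att]
        simp [degW, hub, att]
  · rw [show ((i, Sum.inr (j, y)) : W m c) = pen i j y from rfl]
    by_cases hy : y.val = 0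
    · have : y = 0 := Fin.ext hy
      subst this
      rw [nb_p0]; simp [degW, pen]
    · rw [nb_py (fun h => hy (by rw [h]; rfl))]
      simp [degW, pen, hy]

lemma degW_le (v : W m c) : degW v ≤ c + 2 := by
  rcases v with ⟨i, x | ⟨j, y⟩⟩ <;> simp only [degW] <;> split_ifs <;> omega

lemma deg_eq (v : W m c) : (TG m c).degree v = degW v := by
  rw [← SimpleGraph.card_neighborSet_eq_degree, ← Nat.card_eq_fintype_card, nb_eq_degW]

lemma sum_hub (i : Fin m) :
    ∑ x : Fin (c+2), degW (m := m) (i, Sum.inl x) =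
      (if i.val = 0 then c+1 else c+2) + (if i.val + 1 < m then c+2 else c+1) + c*(c+2) := by
  rw [Fin.sum_univ_succ, Fin.sum_univ_succ]
  simp only [degW, Fin.val_succ, Fin.val_zero]
  norm_num
  ring

lemma sum_pen (i : Fin m) :
    ∑ jy : Fin c × Fin (c+1), degW (m := m) (i, Sum.inr jy) = c * ((c+1) + c*c) := by
  rw [Fintype.sum_prod_type]
  have hinner : ∀ j : Fin c, ∑ y : Fin (c+1), degW (m := m) (i, Sum.inr (j, y)) =
      (c+1) + c*c := by
    intro j
    rw [Fin.sum_univ_succ]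
    simp only [degW, Fin.val_succ, Fin.val_zero]
    norm_num
  rw [Finset.sum_congr rfl (fun j _ => hinner j)]
  simp [Finset.sum_const, mul_comm]

lemma card_filter_zero (hm : 0 < m) :
    (Finset.univ.filter (fun i : Fin m => i.val = 0)).card = 1 := by
  have : Finset.univ.filter (fun i : Fin m => i.val = 0) = {⟨0, hm⟩} := by
    ext i
    simp [Fin.ext_iff]
  rw [this, Finset.card_singleton]

lemma card_filter_last (hm : 0 < m) :
    (Finset.univ.filter (fun i : Fin m => ¬ (i.val + 1 < m))).card = 1 := by
  have : Finset.univ.filter (fun i : Fin m => ¬ (i.val + 1 < m)) = {⟨m-1, by omega⟩} := by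
    ext i
    have := i.isLt
    simp [Fin.ext_iff]
    omega
  rw [this, Finset.card_singleton]

lemma sum_degW (hm : 0 < m) :
    ∑ p : W m c, degW p = m * ((c+2)*(c+1) + c*(c+1)*c + 2*c) + 2*(m-1) := by
  rw [Fintype.sum_prod_type]
  have hrow : ∀ i : Fin m, ∑ s : Fin (c+2) ⊕ Fin c × Fin (c+1), degW (m := m) (i, s) =
      ((if i.val = 0 then c+1 else c+2) + (if i.val + 1 < m then c+2 else c+1)
        + c*(c+2) + c*((c+1) + c*c)) := by
    intro i
    rw [Fintype.sum_sum_type, sum_hub, sum_pen]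
  rw [Finset.sum_congr rfl (fun i _ => hrow i)]
  have e1 : ∀ i : Fin m, (if i.val = 0 then c+1 else c+2) +
      (if i.val + 1 < m then c+2 else c+1) + c*(c+2) + c*((c+1) + c*c) =
      ((2*(c+1) + c*(c+2) + c*((c+1) + c*c)) + ((if i.val = 0 then 0 else 1) +
        (if i.val + 1 < m then 1 else 0))) := by
    intro i; split_ifs <;> omega
  rw [Finset.sum_congr rfl (fun i _ => e1 i)]
  rw [Finset.sum_add_distrib, Finset.sum_const, Finset.sum_add_distrib]
  have e2 : ∑ i : Fin m, (if i.val = 0 then (0:ℕ) else 1) = m - 1 := by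
    rw [Finset.sum_ite, Finset.sum_const, Finset.sum_const]
    have := Finset.card_filter_add_card_filter_not
      (s := (Finset.univ : Finset (Fin m))) (p := fun i : Fin m => i.val = 0)
    rw [card_filter_zero hm] at this
    simp only [Finset.card_univ, Fintype.card_fin] at this
    simp
    omega
  have e3 : ∑ i : Fin m, (if i.val + 1 < m then (1:ℕ) else 0) = m - 1 := by
    rw [Finset.sum_ite, Finset.sum_const, Finset.sum_const]
    have := Finset.card_filter_add_card_filter_not
      (s := (Finset.univ : Finset (Fin m))) (p := fun i : Fin m => i.val + 1 < m)
    rw [card_filter_last hm] at this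
    simp only [Finset.card_univ, Fintype.card_fin] at this
    simp
    omega
  rw [e2, e3]
  simp only [Finset.card_univ, Fintype.card_fin, smul_eq_mul]
  ring_nf

lemma edge_count (hm : 0 < m) :
    2 * Nat.card (TG m c).edgeSet =
      m * ((c+2)*(c+1) + c*(c+1)*c + 2*c) + 2*(m-1) := by
  classical
  have hs := SimpleGraph.sum_degrees_eq_twice_card_edges (TG m c)
  have hd : ∑ v : W m c, (TG m c).degree v = ∑ v : W m c, degW v :=
    Finset.sum_congr rfl (fun v _ => deg_eq v)
  have hcard : Nat.card (TG m c).edgeSet = (TG m c).edgeFinset.card := by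
    rw [Nat.card_eq_fintype_card, SimpleGraph.edgeFinset_card]
  rw [hcard, ← hs, hd, sum_degW hm]

end Degrees

end Stmt9


namespace Stmt9

variable {m c : ℕ}

lemma hub_in_Wk (hm : 0 < m) (i : Fin m) (x : Fin (c+2)) :
    (hub i x : W m c) ∈ ATPaper.Wk (TG m c) (c+3) := by
  refine ⟨hubF i, ?_, ?_⟩
  · have h : (c+3) - 1 = c + 2 := by omega
    rw [h]; exact hub_isNClique i
  · exact Finset.mem_image.mpr ⟨x, Finset.mem_univ _, rfl⟩

lemma qset (hc : 0 < c) (hm : 0 < m) :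
    {v : W m c | v ∈ ATPaper.Wk (TG m c) (c+3) ∧
        ((TG m c).induce ({v}ᶜ : Set (W m c))).Preconnected} =
      {hub ⟨0, hm⟩ 0, hub ⟨m-1, by omega⟩ 1} := by
  ext v
  simp only [Set.mem_setOf_eq, Set.mem_insert_iff, Set.mem_singleton_iff]
  constructor
  · rintro ⟨⟨S, hS, hvS⟩, hpre⟩
    have h32 : (c+3) - 1 = c + 2 := by omega
    rw [h32] at hS
    obtain ⟨i, x, rfl⟩ := clique_class hc hS hvS
    by_cases hx0 : x.val = 0
    · left
      have hx : x = 0 := Fin.ext hx0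
      subst hx
      by_cases hi : i.val = 0
      · have : i = ⟨0, hm⟩ := Fin.ext hi
        rw [this]; rfl
      · exact absurd hpre (cut0 (by omega))
    · by_cases hx1 : x.val = 1
      · right
        have hx : x = 1 := Fin.ext hx1
        subst hx
        by_cases hi : i.val + 1 < m
        · exact absurd hpre (cut1 hi)
        · have : i = ⟨m-1, by omega⟩ := Fin.ext (show i.val = m - 1 by have := i.isLt; omega)
          rw [this]; rfl
      · exact absurd hpre (cut_att (by omega) x.isLt)
  · intro hv
    rcases hv with rfl | rfl
    · exact ⟨hub_in_Wk hm _ _, noncut0 hc hm⟩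
    · exact ⟨hub_in_Wk hm _ _, noncut1 hc hm⟩

end Stmt9

/-- the extremal construction. -/
theorem stmt_9 (k m : ℕ) (hk : 5 ≤ k) (hm : 1 ≤ m) :
    ∃ (W : Type) (_ : Fintype W) (T : SimpleGraph W), ATPaper.MemTk T k ∧
      ATPaper.HasClique T (k - 1) ∧ ATPaper.qT T k = 2 ∧
      Nat.card W = m * ((k - 1) + (k - 2) * (k - 3)) ∧
      2 * Nat.card T.edgeSet =
        m * ((k - 1) * (k - 2) + (k - 3) * (k - 2) * (k - 3) + 2 * (k - 3)) + 2 * (m - 1) := by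
  obtain ⟨c, rfl⟩ : ∃ c, k = c + 3 := ⟨k - 3, by omega⟩
  have hc : 0 < c := by omega
  have hm0 : 0 < m := hm
  have e1 : c + 3 - 1 = c + 2 := by omega
  have e2 : c + 3 - 2 = c + 1 := by omega
  have e3 : c + 3 - 3 = c := by omega
  refine ⟨Stmt9.W m c, inferInstance, Stmt9.TG m c, ⟨?_, ?_, ?_⟩, ?_, ?_, ?_, ?_⟩
  · -- Gallai tree
    refine ⟨Stmt9.TG_connected hc hm0, ?_⟩
    intro B hB
    exact Or.inl (Stmt9.block_clique hB.1 hB.2.1)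
  · -- degree bound
    intro v
    rw [Stmt9.nb_eq_degW v, e1]
    exact Stmt9.degW_le v
  · -- not K_k
    rintro ⟨e⟩
    have hcard := Nat.card_congr e.toEquiv
    rw [Nat.card_eq_fintype_card, Nat.card_eq_fintype_card] at hcard
    simp only [Stmt9.W, Fintype.card_prod, Fintype.card_sum, Fintype.card_fin] at hcard
    have h2 : 2 ≤ c * (c + 1) := by nlinarith
    have h3 : (c + 2 + c * (c + 1)) ≤ m * (c + 2 + c * (c + 1)) :=
      Nat.le_mul_of_pos_left _ hm0
    omega
  · -- has K_{k-1}
    refine ⟨Stmt9.hubF ⟨0, hm0⟩, ?_⟩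
    rw [e1]
    exact Stmt9.hub_isNClique _
  · -- q = 2
    show Nat.card {v : Stmt9.W m c | v ∈ ATPaper.Wk (Stmt9.TG m c) (c+3) ∧
      ((Stmt9.TG m c).induce ({v}ᶜ : Set (Stmt9.W m c))).Preconnected} = 2
    rw [Stmt9.qset hc hm0]
    rw [Nat.card_coe_set_eq]
    apply Set.ncard_pair
    intro h
    have := congrArg Prod.snd h
    simp only [Stmt9.hub, Sum.inl.injEq] at this
    have := congrArg Fin.val this
    simp at this
  · -- vertex count
    rw [e1, e2, e3, Nat.card_eq_fintype_card]
    simp only [Stmt9.W, Fintype.card_prod, Fintype.card_sum, Fintype.card_fin]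
    ring
  · -- edge count
    rw [e1, e2, e3]
    exact Stmt9.edge_count hm0
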